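/- Let q be an odd prime and x, y, z ∈ ℤ/qℤ with z invertible mod q. Then T(x,y,z;q) = q · S(x z^{-1}, −y z^{-1}; q) · e((−x z^{-1} + y z^{-1})/q) − q − c_q(x) c_q(y), where T is the triple exponential sum ∑*_{a,b,c} e((c(a^{-1}−b^{-1}) + ax + by + cz)/q), S(m,n;q) = ∑*_{a} e((ma + n a^{-1})/q) is the Kloosterman sum, and c_q is the Ramanujan sum. -/

import Mathlib

open Complex Finset

/-- `e(t/q)` for a residue `t` mod `q`. -/
noncomputable def eZMod (q : ℕ) [NeZero q] (t : ZMod q) : ℂ :=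
  Complex.exp (2 * Real.pi * Complex.I * (t.val : ℂ) / (q : ℂ))

/-- The triple exponential sum `T(x,y,z;q)`. -/
noncomputable def tripleSum (q : ℕ) [NeZero q] (x y z : ZMod q) : ℂ :=
  ∑ a : (ZMod q)ˣ, ∑ b : (ZMod q)ˣ, ∑ c : (ZMod q)ˣ,
    eZMod q ((c : ZMod q) * ((a⁻¹ : (ZMod q)ˣ) - (b⁻¹ : (ZMod q)ˣ))
      + (a : ZMod q) * x + (b : ZMod q) * y + (c : ZMod q) * z)

/-- The Kloosterman sum `S(m,n;q)`. -/
noncomputable def kloosterman (q : ℕ) [NeZero q] (m n : ZMod q) : ℂ :=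
  ∑ a : (ZMod q)ˣ, eZMod q (m * (a : ZMod q) + n * ((a⁻¹ : (ZMod q)ˣ) : ZMod q))

/-- The Ramanujan sum mod `q` for prime `q`, as a function of a residue. -/
noncomputable def cq (q : ℕ) (u : ZMod q) : ℂ := if u = 0 then (q : ℂ) - 1 else -1

lemma eZMod_eq_stdAddChar {q : ℕ} [NeZero q] (t : ZMod q) :
    eZMod q t = ZMod.stdAddChar t := by
  rw [ZMod.stdAddChar_apply, ZMod.toCircle_apply]
  rfl

lemma eZMod_add {q : ℕ} [NeZero q] (s t : ZMod q) :
    eZMod q (s + t) = eZMod q s * eZMod q t := by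
  simp only [eZMod_eq_stdAddChar]
  exact AddChar.map_add_eq_mul _ s t

lemma eZMod_zero {q : ℕ} [NeZero q] : eZMod q (0 : ZMod q) = 1 := by
  simp only [eZMod_eq_stdAddChar]
  exact AddChar.map_zero_eq_one _

lemma sum_eZMod_mul {q : ℕ} [NeZero q] (w : ZMod q) :
    ∑ c : ZMod q, eZMod q (c * w) = if w = 0 then (q : ℂ) else 0 := by
  simp only [eZMod_eq_stdAddChar]
  rw [AddChar.sum_mulShift w (ZMod.isPrimitive_stdAddChar q), ZMod.card]
  split_ifs <;> simp

lemma sum_units_eq {q : ℕ} [NeZero q] (hq : q.Prime) (f : ZMod q → ℂ) :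
    ∑ u : (ZMod q)ˣ, f ↑u = ∑ c ∈ Finset.univ.filter (fun c : ZMod q => c ≠ 0), f c := by
  haveI := Fact.mk hq
  rw [Finset.sum_subtype (p := fun c : ZMod q => c ≠ 0)
    (Finset.univ.filter fun c : ZMod q => c ≠ 0) (by simp) f]
  exact Fintype.sum_equiv unitsEquivNeZero _ _ (by simp)

theorem tripleSum_z_unit (q : ℕ) [NeZero q] (hq : q.Prime) (hodd : Odd q)
    (x y z : ZMod q) (hz : IsUnit z) :
    tripleSum q x y z
      = (q : ℂ) * kloosterman q (x * z⁻¹) (-y * z⁻¹) * eZMod q (-x * z⁻¹ + y * z⁻¹)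
        - (q : ℂ) - cq q x * cq q y := by
  haveI := Fact.mk hq
  have hz0 : z ≠ 0 := hz.ne_zero
  classical
  set s0 : Finset (ZMod q) := Finset.univ.filter (fun c : ZMod q => c ≠ 0) with hs0
  have h1s0 : (1 : ZMod q) ∈ s0 := by simp [hs0]
  have sum_s0 : ∀ w : ZMod q,
      ∑ c ∈ s0, eZMod q (c * w) = (if w = 0 then (q : ℂ) else 0) - 1 := by
    intro w
    rw [hs0, Finset.filter_ne', Finset.sum_erase_eq_sub (Finset.mem_univ 0), sum_eZMod_mul]
    norm_num [eZMod_zero]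
  -- Step 1: express tripleSum as a sum over nonzero field elements
  have hT : tripleSum q x y z = ∑ α ∈ s0, ∑ β ∈ s0, ∑ γ ∈ s0,
      eZMod q (γ * (α⁻¹ - β⁻¹) + α * x + β * y + γ * z) := by
    unfold tripleSum
    simp_rw [Units.val_inv_eq_inv_val]
    refine Eq.trans (sum_units_eq hq (fun α => ∑ b : (ZMod q)ˣ, ∑ c : (ZMod q)ˣ,
        eZMod q ((c : ZMod q) * (α⁻¹ - ((b : ZMod q))⁻¹) + α * x + (b : ZMod q) * y
          + (c : ZMod q) * z))) ?_
    refine Finset.sum_congr rfl fun α _ => ?_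
    refine Eq.trans (sum_units_eq hq (fun β => ∑ c : (ZMod q)ˣ,
        eZMod q ((c : ZMod q) * (α⁻¹ - β⁻¹) + α * x + β * y + (c : ZMod q) * z))) ?_
    refine Finset.sum_congr rfl fun β _ => ?_
    exact sum_units_eq hq (fun γ => eZMod q (γ * (α⁻¹ - β⁻¹) + α * x + β * y + γ * z))
  -- Step 2: evaluate the innermost sum
  have hstep1 : ∀ α β : ZMod q,
      (∑ γ ∈ s0, eZMod q (γ * (α⁻¹ - β⁻¹) + α * x + β * y + γ * z))
        = ((if α⁻¹ - β⁻¹ + z = 0 then (q : ℂ) else 0) - 1) * eZMod q (α * x + β * y) := by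
    intro α β
    have harg : ∀ γ : ZMod q, γ * (α⁻¹ - β⁻¹) + α * x + β * y + γ * z
        = γ * (α⁻¹ - β⁻¹ + z) + (α * x + β * y) := fun γ => by ring
    simp_rw [harg, eZMod_add, ← Finset.sum_mul, sum_s0]
  -- Step 3: the inner b-sum of the indicator term
  have hinner : ∀ α : ZMod q,
      (∑ β ∈ s0, if α⁻¹ - β⁻¹ + z = 0 then eZMod q (α * x + β * y) else 0)
        = if α⁻¹ + z = 0 then 0 else eZMod q (α * x + (α⁻¹ + z)⁻¹ * y) := by
    intro α
    have h1 : (∑ β ∈ s0, if α⁻¹ - β⁻¹ + z = 0 then eZMod q (α * x + β * y) else 0)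
        = ∑ β ∈ s0, if α⁻¹ - β + z = 0 then eZMod q (α * x + β⁻¹ * y) else 0 := by
      refine Finset.sum_nbij' (fun β => β⁻¹) (fun β => β⁻¹) ?_ ?_ ?_ ?_ ?_
      · intro β hβ
        simp only [hs0, Finset.mem_filter, Finset.mem_univ, true_and] at hβ ⊢
        exact inv_ne_zero hβ
      · intro β hβ
        simp only [hs0, Finset.mem_filter, Finset.mem_univ, true_and] at hβ ⊢
        exact inv_ne_zero hβ
      · intro β _; exact inv_inv β
      · intro β _; exact inv_inv β
      · intro β _; rw [inv_inv]
    rw [h1]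
    have h2 : ∀ β : ZMod q, (α⁻¹ - β + z = 0) ↔ (β = α⁻¹ + z) := by
      intro β
      constructor <;> intro h <;> linear_combination -h
    simp_rw [h2]
    rw [Finset.sum_ite_eq' s0 (α⁻¹ + z) (fun β => eZMod q (α * x + β⁻¹ * y))]
    simp only [hs0, Finset.mem_filter, Finset.mem_univ, true_and, ite_not]
  -- Step 4: kloosterman * e as a field sum
  have hK : kloosterman q (x * z⁻¹) (-y * z⁻¹) * eZMod q (-x * z⁻¹ + y * z⁻¹)
      = ∑ t ∈ s0, eZMod q (x * z⁻¹ * t + -y * z⁻¹ * t⁻¹ + (-x * z⁻¹ + y * z⁻¹)) := by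
    unfold kloosterman
    simp_rw [Units.val_inv_eq_inv_val]
    rw [Eq.trans (sum_units_eq hq
      (fun t => eZMod q (x * z⁻¹ * t + -y * z⁻¹ * t⁻¹))) rfl]
    rw [Finset.sum_mul]
    exact Finset.sum_congr rfl fun t _ => (eZMod_add _ _).symm
  -- Step 5: the main bijection
  have hS1 : (∑ α ∈ s0, ∑ β ∈ s0, if α⁻¹ - β⁻¹ + z = 0 then eZMod q (α * x + β * y) else 0)
      = kloosterman q (x * z⁻¹) (-y * z⁻¹) * eZMod q (-x * z⁻¹ + y * z⁻¹) - 1 := by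
    simp_rw [hinner]
    rw [hK]
    have hg1 : eZMod q (x * z⁻¹ * 1 + -y * z⁻¹ * 1⁻¹ + (-x * z⁻¹ + y * z⁻¹)) = 1 := by
      rw [show (x * z⁻¹ * 1 + -y * z⁻¹ * 1⁻¹ + (-x * z⁻¹ + y * z⁻¹) : ZMod q) = 0 by
        rw [inv_one]; ring]
      exact eZMod_zero
    rw [← Finset.sum_erase_add s0 (fun t => eZMod q
      (x * z⁻¹ * t + -y * z⁻¹ * t⁻¹ + (-x * z⁻¹ + y * z⁻¹))) h1s0, hg1]
    have : (∑ α ∈ s0, if α⁻¹ + z = 0 then 0 else eZMod q (α * x + (α⁻¹ + z)⁻¹ * y))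
        = ∑ t ∈ s0.erase 1, eZMod q (x * z⁻¹ * t + -y * z⁻¹ * t⁻¹ + (-x * z⁻¹ + y * z⁻¹)) := by
      simp_rw [show ∀ α : ZMod q, (if α⁻¹ + z = 0 then (0:ℂ)
          else eZMod q (α * x + (α⁻¹ + z)⁻¹ * y))
          = if ¬(α⁻¹ + z = 0) then eZMod q (α * x + (α⁻¹ + z)⁻¹ * y) else 0
        from fun α => (ite_not _ _ _).symm]
      rw [← Finset.sum_filter]
      refine Finset.sum_nbij' (fun α => α * z + 1) (fun t => (t - 1) * z⁻¹) ?_ ?_ ?_ ?_ ?_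
      · intro α hα
        simp only [hs0, Finset.mem_filter, Finset.mem_univ, true_and, Finset.mem_erase] at hα ⊢
        obtain ⟨hα0, hαz⟩ := hα
        have hmul : α * (α⁻¹ + z) = α * z + 1 := by
          field_simp
          ring
        constructor
        · intro h
          have : α * z = 0 := by linear_combination h
          rcases mul_eq_zero.1 this with h' | h' <;> [exact hα0 h'; exact hz0 h']
        · intro h
          exact mul_ne_zero hα0 hαz (hmul.trans h)
      · intro t ht
        simp only [hs0, Finset.mem_filter, Finset.mem_univ, true_and, Finset.mem_erase] at ht ⊢
        obtain ⟨ht1, ht0⟩ := ht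
        have htm1 : t - 1 ≠ 0 := sub_ne_zero.2 ht1
        refine ⟨mul_ne_zero htm1 (inv_ne_zero hz0), ?_⟩
        intro h
        rw [mul_inv, inv_inv] at h
        have h1 : z * ((t - 1)⁻¹ + 1) = 0 := by linear_combination h
        rcases mul_eq_zero.1 h1 with h' | h'
        · exact hz0 h'
        · have h2 : (t - 1)⁻¹ = -1 := by linear_combination h'
          have h3 : t - 1 = -1 := by
            have := congrArg Inv.inv h2
            rwa [inv_inv, inv_neg, inv_one] at this
          exact ht0 (by linear_combination h3)
      · intro α hα
        field_simp
        ring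
      · intro t ht
        field_simp
        ring
      · intro α hα
        simp only [hs0, Finset.mem_filter, Finset.mem_univ, true_and] at hα
        obtain ⟨hα0, hαz⟩ := hα
        congr 1
        have h1 : α * z + 1 ≠ 0 := by
          have hmul : α * (α⁻¹ + z) = α * z + 1 := by field_simp; ring
          exact fun h => mul_ne_zero hα0 hαz (hmul.trans h)
        have hinv : (α⁻¹ + z)⁻¹ = α * (α * z + 1)⁻¹ := by
          rw [show α⁻¹ + z = (α * z + 1) * α⁻¹ by field_simp; ring]
          rw [mul_inv, inv_inv]
          ring
        rw [hinv]
        field_simp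
        ring
    rw [this]
    ring
  -- Final assembly
  have hE : (∑ α ∈ s0, ∑ β ∈ s0, eZMod q (α * x + β * y)) = cq q x * cq q y := by
    simp_rw [eZMod_add]
    rw [← Finset.sum_mul_sum, sum_s0 x, sum_s0 y]
    unfold cq
    split_ifs <;> ring
  have hfact : (∑ α ∈ s0, ∑ β ∈ s0, if α⁻¹ - β⁻¹ + z = 0
        then (q : ℂ) * eZMod q (α * x + β * y) else 0)
      = (q : ℂ) * ∑ α ∈ s0, ∑ β ∈ s0,
        (if α⁻¹ - β⁻¹ + z = 0 then eZMod q (α * x + β * y) else 0) := by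
    rw [Finset.mul_sum]
    refine Finset.sum_congr rfl fun α _ => ?_
    rw [Finset.mul_sum]
    refine Finset.sum_congr rfl fun β _ => ?_
    rw [mul_ite, mul_zero]
  rw [hT]
  simp_rw [hstep1, sub_mul, one_mul, ite_mul, zero_mul, Finset.sum_sub_distrib]
  rw [hfact, hS1, hE]
  ring
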